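/- A finite group G is nilpotent if and only if the diagonal homomorphism Δ : G →* G × G, g ↦ (g,g), has the right lifting property with respect to every homomorphism f : N →* H whose image has normal closure equal to all of H. -/

import Mathlib

/-- Quillen lifting property: `f ⧄ g`. -/
def Lifts {A B X Y : Type*} [Group A] [Group B] [Group X] [Group Y]
    (f : A →* B) (g : X →* Y) : Prop :=
  ∀ (i : A →* X) (j : B →* Y), g.comp i = j.comp f →
    ∃ h : B →* X, h.comp f = i ∧ g.comp h = j

universe v

namespace Stmt17Aux

open Subgroup

/-- The separation property: any two homomorphisms into `G` that agree on a set with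
normal closure everything are equal. -/
def Sep (G : Type v) [Group G] : Prop :=
  ∀ (H : Type v) [Group H] (j₁ j₂ : H →* G),
    Subgroup.normalClosure {h | j₁ h = j₂ h} = ⊤ → j₁ = j₂

theorem center_ne_bot (G : Type*) [Group G] [Group.IsNilpotent G] [Nontrivial G] :
    Subgroup.center G ≠ ⊥ := by
  intro hbot
  obtain ⟨n, hn⟩ := _root_.nilpotent_iff_lowerCentralSeries.mp ‹Group.IsNilpotent G›
  have key : ∀ n, (⊤ : Subgroup G).lowerCentralSeries n ≠ ⊥ := by
    intro n
    induction n with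
    | zero =>
      rw [Subgroup.lowerCentralSeries_zero]
      intro h
      obtain ⟨x, hx⟩ := exists_ne (1 : G)
      exact hx ((Subgroup.eq_bot_iff_forall _).mp h x trivial)
    | succ m ih =>
      intro h
      have h' : ⁅(⊤ : Subgroup G).lowerCentralSeries m, (⊤ : Subgroup G)⁆ = ⊥ := by
        rw [← h]; rfl
      have := Subgroup.commutator_eq_bot_iff_le_centralizer.mp h'
      rw [Subgroup.coe_top, Subgroup.centralizer_univ, hbot, le_bot_iff] at this
      exact ih this
  exact key n hn

theorem closure_eq_top_of_normalClosure_eq_top {K : Type*} [Group K] [Finite K]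
    [Group.IsNilpotent K] {s : Set K} (h : Subgroup.normalClosure s = ⊤) :
    Subgroup.closure s = ⊤ := by
  by_contra hne
  obtain ⟨M, hM, hle⟩ :=
    (eq_top_or_exists_le_coatom (Subgroup.closure s)).resolve_left hne
  haveI : M.Normal :=
    Subgroup.NormalizerCondition.normal_of_coatom M normalizerCondition_of_isNilpotent hM
  have hsub : s ⊆ (M : Set K) := fun x hx => hle (Subgroup.subset_closure hx)
  have : Subgroup.normalClosure s ≤ M := Subgroup.normalClosure_le_normal hsub
  rw [h] at this
  exact hM.1 (top_le_iff.mp this)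

theorem sep_of_nilpotent (G : Type v) [Group G] [Finite G] [Group.IsNilpotent G] :
    Sep G := by
  intro H _ j₁ j₂ hE
  set j : H →* G × G := j₁.prod j₂ with hj
  have h1 : Subgroup.normalClosure (j.rangeRestrict '' {h | j₁ h = j₂ h}) = ⊤ := by
    rw [← Subgroup.map_normalClosure _ _ j.rangeRestrict_surjective, hE,
      Subgroup.map_top_of_surjective _ j.rangeRestrict_surjective]
  have h2 : Subgroup.closure (j.rangeRestrict '' {h | j₁ h = j₂ h}) = ⊤ :=
    closure_eq_top_of_normalClosure_eq_top h1
  have h3 : Subgroup.closure (j.rangeRestrict '' {h | j₁ h = j₂ h}) ≤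
      Subgroup.comap j.range.subtype
        (MonoidHom.eqLocus (MonoidHom.fst G G) (MonoidHom.snd G G)) := by
    rw [Subgroup.closure_le]
    rintro _ ⟨h, hh, rfl⟩
    exact hh
  rw [h2] at h3
  ext h
  exact h3 (Subgroup.mem_top (j.rangeRestrict h))

theorem sep_subgroup {G : Type v} [Group G] (hG : Sep G) (A : Subgroup G) : Sep A := by
  intro H _ j₁ j₂ hE
  have heq : {h | (A.subtype.comp j₁) h = (A.subtype.comp j₂) h} = {h | j₁ h = j₂ h} := by
    ext h
    exact Subtype.coe_inj
  have := hG H (A.subtype.comp j₁) (A.subtype.comp j₂) (by rw [heq]; exact hE)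
  ext h
  exact (DFunLike.congr_fun this h : _)

theorem sep_quotient {G : Type v} [Group G] [Finite G] (hG : Sep G) (N : Subgroup G)
    [N.Normal] : Sep (G ⧸ N) := by
  intro H _ j₁ j₂ hE
  set Q := G ⧸ N with hQdef
  set π : G →* Q := QuotientGroup.mk' N with hπdef
  have hπ : Function.Surjective π := QuotientGroup.mk'_surjective N
  set Phi : G × G →* Q × Q := MonoidHom.prodMap π π with hPhidef
  have hPhi : Function.Surjective Phi := hπ.prodMap hπ
  set DG : Subgroup (G × G) :=
    MonoidHom.eqLocus (MonoidHom.fst G G) (MonoidHom.snd G G) with hDGdef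
  set DQ : Subgroup (Q × Q) :=
    MonoidHom.eqLocus (MonoidHom.fst Q Q) (MonoidHom.snd Q Q) with hDQdef
  set j : H →* Q × Q := j₁.prod j₂ with hjdef
  set Kb : Subgroup (Q × Q) := j.range with hKbdef
  -- normal closure of the diagonal part of `Kb` is everything
  have hKb : Subgroup.normalClosure
      ((Subgroup.comap Kb.subtype DQ : Subgroup Kb) : Set Kb) = ⊤ := by
    have h1 : Subgroup.normalClosure (j.rangeRestrict '' {h | j₁ h = j₂ h}) = ⊤ := by
      rw [← Subgroup.map_normalClosure _ _ j.rangeRestrict_surjective, hE,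
        Subgroup.map_top_of_surjective _ j.rangeRestrict_surjective]
    refine le_antisymm le_top (h1 ▸ Subgroup.normalClosure_mono ?_)
    rintro _ ⟨h, hh, rfl⟩
    exact hh
  -- the one-step normal-closure-of-diagonal operator
  set step : Subgroup (G × G) → Subgroup (G × G) := fun X =>
    Subgroup.map X.subtype
      (Subgroup.normalClosure ((Subgroup.comap X.subtype DG : Subgroup X) : Set X))
    with hstepdef
  have step_le : ∀ X, step X ≤ X := fun X => Subgroup.map_subtype_le _
  have diag_le_step : ∀ (X : Subgroup (G × G)) (g : G × G), g ∈ X → g ∈ DG → g ∈ step X := by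
    intro X g hgX hgD
    exact ⟨⟨g, hgX⟩, Subgroup.subset_normalClosure hgD, rfl⟩
  -- the invariant maintained along the iteration
  set Inv : Subgroup (G × G) → Prop := fun X =>
    Subgroup.map Phi X = Kb ∧ ∀ g : G, Phi (g, g) ∈ Kb → (g, g) ∈ X with hInvdef
  have inv_start : Inv (Subgroup.comap Phi Kb) :=
    ⟨Subgroup.map_comap_eq_self_of_surjective hPhi _, fun g hg => hg⟩
  have inv_step : ∀ X, Inv X → Inv (step X) := by
    rintro X ⟨hmap, hdiag⟩
    have hmem : ∀ x : X, Phi (x : G × G) ∈ Kb := by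
      intro x
      rw [← hmap]
      exact ⟨(x : G × G), x.2, rfl⟩
    set ρ : X →* Kb := (Phi.comp X.subtype).codRestrict Kb (fun x => hmem x) with hρdef
    have hρva : ∀ x : X, ((ρ x : Q × Q)) = Phi (x : G × G) := fun x => rfl
    have hρ : Function.Surjective ρ := by
      rintro ⟨k, hk⟩
      rw [← hmap] at hk
      obtain ⟨x, hxX, hx⟩ := hk
      exact ⟨⟨x, hxX⟩, Subtype.ext hx⟩
    have hcover : ((Subgroup.comap Kb.subtype DQ : Subgroup Kb) : Set Kb) ⊆
        ρ '' ((Subgroup.comap X.subtype DG : Subgroup X) : Set X) := by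
      rintro ⟨⟨q1, q2⟩, hk⟩ hd
      have hq : q1 = q2 := hd
      subst hq
      obtain ⟨g, hg⟩ := hπ q1
      have hgk : Phi (g, g) ∈ Kb := by
        have : Phi (g, g) = (q1, q1) := by
          simp [hPhidef, hg]
        rw [this]; exact hk
      have hgX : (g, g) ∈ X := hdiag g hgk
      refine ⟨⟨(g, g), hgX⟩, rfl, ?_⟩
      apply Subtype.ext
      show Phi (g, g) = (q1, q1)
      simp [hPhidef, hg]
    have htop : Subgroup.normalClosure
        (ρ '' ((Subgroup.comap X.subtype DG : Subgroup X) : Set X)) = ⊤ :=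
      le_antisymm le_top (hKb ▸ Subgroup.normalClosure_mono hcover)
    have hmapρ : Subgroup.map ρ
        (Subgroup.normalClosure ((Subgroup.comap X.subtype DG : Subgroup X) : Set X)) = ⊤ := by
      rw [Subgroup.map_normalClosure _ _ hρ, htop]
    constructor
    · apply le_antisymm
      · rw [← hmap]
        exact Subgroup.map_mono (step_le X)
      · intro k hk
        have hmem2 : (⟨k, hk⟩ : Kb) ∈ Subgroup.map ρ
            (Subgroup.normalClosure ((Subgroup.comap X.subtype DG : Subgroup X) : Set X)) := by
          rw [hmapρ]; trivial
        obtain ⟨x, hx, hρx⟩ := hmem2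
        refine ⟨(x : G × G), ⟨x, hx, rfl⟩, ?_⟩
        have : ((ρ x : Q × Q)) = k := congrArg Subtype.val hρx
        rwa [hρva] at this
    · intro g hg
      exact diag_le_step X (g, g) (hdiag g hg) rfl
  -- iterate until stabilization
  set Ks : ℕ → Subgroup (G × G) := fun n => step^[n] (Subgroup.comap Phi Kb) with hKsdef
  have hKs_succ : ∀ n, Ks (n + 1) = step (Ks n) := fun n =>
    Function.iterate_succ_apply' step n _
  have hKs_inv : ∀ n, Inv (Ks n) := by
    intro n
    induction n with
    | zero => exact inv_start
    | succ m ih => rw [hKs_succ]; exact inv_step _ ih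
  have hmono : ∀ n, Ks (n + 1) ≤ Ks n := fun n => by rw [hKs_succ]; exact step_le _
  have hstab : ∃ n, step (Ks n) = Ks n := by
    by_contra hc
    push_neg at hc
    have hlt : ∀ n, Ks (n + 1) < Ks n := fun n =>
      lt_of_le_of_ne (hmono n) (by rw [hKs_succ]; exact hc n)
    have hcard : ∀ n, Nat.card (Ks (n + 1)) < Nat.card (Ks n) := by
      intro n
      rcases lt_or_ge (Nat.card (Ks (n + 1))) (Nat.card (Ks n)) with h | h
      · exact h
      · exact absurd (Subgroup.eq_of_le_of_card_ge (hlt n).le h) (hlt n).ne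
    have hbound : ∀ n, Nat.card (Ks n) + n ≤ Nat.card (Ks 0) := by
      intro n
      induction n with
      | zero => simp
      | succ m ih =>
        have := hcard m
        omega
    have := hbound (Nat.card (Ks 0) + 1)
    have hpos : 0 < Nat.card (Ks (Nat.card (Ks 0) + 1)) := Nat.card_pos
    omega
  obtain ⟨n, hfix⟩ := hstab
  -- on the stable subgroup, apply the separation property of G
  have hsub : Ks n ≤ DG := by
    set X := Ks n with hXdef
    have hncl : Subgroup.normalClosure
        ((Subgroup.comap X.subtype DG : Subgroup X) : Set X) = ⊤ := by
      apply Subgroup.map_injective X.subtype_injective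
      have h2 : Subgroup.map X.subtype ⊤ = X := by
        rw [← MonoidHom.range_eq_map, Subgroup.range_subtype]
      rw [h2]
      exact hfix
    have heqset : {x : X | ((MonoidHom.fst G G).comp X.subtype) x
        = ((MonoidHom.snd G G).comp X.subtype) x}
        = ((Subgroup.comap X.subtype DG : Subgroup X) : Set X) := rfl
    have heq := hG X ((MonoidHom.fst G G).comp X.subtype)
      ((MonoidHom.snd G G).comp X.subtype) (by rw [heqset]; exact hncl)
    intro x hx
    exact DFunLike.congr_fun heq ⟨x, hx⟩
  have hKbD : Kb ≤ DQ := by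
    rw [← (hKs_inv n).1]
    rintro _ ⟨x, hx, rfl⟩
    have hxD : x.1 = x.2 := hsub hx
    show π x.1 = π x.2
    rw [hxD]
  ext h
  exact hKbD ⟨h, rfl⟩

theorem nilpotent_of_sep :
    ∀ (n : ℕ) (G : Type v) [Group G] [Finite G], Nat.card G ≤ n → Sep G →
      Group.IsNilpotent G := by
  intro n
  induction n with
  | zero =>
    intro G _ _ hcard _
    have : 0 < Nat.card G := Nat.card_pos
    omega
  | succ n ih =>
    intro G _ _ hcard hsep
    rcases subsingleton_or_nontrivial G with hG | hG
    · infer_instance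
    by_cases hZ : Subgroup.center G = ⊥
    · -- centerless case
      by_contra hnil
      obtain ⟨M, hM, hMn⟩ : ∃ M : Subgroup G, IsCoatom M ∧ ¬M.Normal := by
        by_contra hcon
        push_neg at hcon
        exact hnil (((isNilpotent_of_finite_tfae (G := G)).out 2 0).mp hcon)
      -- M is nontrivial
      have hMbot : M ≠ ⊥ := by
        intro hbot
        obtain ⟨g, hg⟩ := exists_ne (1 : G)
        have hzp : Subgroup.zpowers g = ⊤ := by
          apply hM.2
          rw [hbot, bot_lt_iff_ne_bot]
          intro h
          exact hg (Subgroup.zpowers_eq_bot.mp h)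
        have hcen : g ∈ Subgroup.center G := by
          rw [Subgroup.mem_center_iff]
          intro x
          have hx : x ∈ Subgroup.zpowers g := hzp ▸ Subgroup.mem_top x
          obtain ⟨k, rfl⟩ := hx
          exact (Commute.refl g).zpow_left k
        rw [hZ, Subgroup.mem_bot] at hcen
        exact hg hcen
      -- M is nilpotent
      have hMcard : Nat.card M ≤ n := by
        have hle : Nat.card M ≤ Nat.card G := Subgroup.card_le_card_group M
        have hne : Nat.card M ≠ Nat.card G := by
          intro h
          exact hM.1 ((Subgroup.card_eq_iff_eq_top M).mp h)
        omega
      haveI hMnil : Group.IsNilpotent M := ih M hMcard (sep_subgroup hsep M)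
      haveI : Nontrivial M := (Subgroup.nontrivial_iff_ne_bot M).mpr hMbot
      have hcenM : Subgroup.center M ≠ ⊥ := center_ne_bot M
      obtain ⟨y, hy, hy1⟩ : ∃ y : M, y ∈ Subgroup.center M ∧ y ≠ 1 := by
        by_contra hcon
        push_neg at hcon
        apply hcenM
        rw [Subgroup.eq_bot_iff_forall]
        intro x hx
        by_contra hx1
        exact hx1 (hcon x hx)
      -- conjugation by y agrees with the identity on M
      set c : G →* G := (MulAut.conj (y : G)).toMonoidHom with hcdef
      have hMsub : (M : Set G) ⊆ {x | MonoidHom.id G x = c x} := by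
        intro m hm
        have := (Subgroup.mem_center_iff.mp hy) ⟨m, hm⟩
        have hcomm : m * (y : G) = (y : G) * m := congrArg Subtype.val this
        show m = (y : G) * m * (y : G)⁻¹
        rw [← hcomm]
        group
      have hncl : Subgroup.normalClosure {x | MonoidHom.id G x = c x} = ⊤ := by
        by_contra hne
        have hle : M ≤ Subgroup.normalClosure {x | MonoidHom.id G x = c x} :=
          fun m hm => Subgroup.subset_normalClosure (hMsub hm)
        have : Subgroup.normalClosure {x | MonoidHom.id G x = c x} = M := by
          rcases eq_or_lt_of_le hle with h | h
          · exact h.symm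
          · exact absurd (hM.2 _ h) hne
        exact hMn (this ▸ Subgroup.normalClosure_normal)
      have heq := hsep G (MonoidHom.id G) c hncl
      have hyc : (y : G) ∈ Subgroup.center G := by
        rw [Subgroup.mem_center_iff]
        intro x
        have hx : x = (y : G) * x * (y : G)⁻¹ := DFunLike.congr_fun heq x
        calc x * (y : G) = ((y : G) * x * (y : G)⁻¹) * (y : G) := by rw [← hx]
          _ = (y : G) * x := by group
      rw [hZ, Subgroup.mem_bot] at hyc
      exact hy1 (Subtype.ext hyc)
    · -- nontrivial center: pass to the quotient
      have hq := sep_quotient hsep (Subgroup.center G)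
      have hcardq : Nat.card (G ⧸ Subgroup.center G) ≤ n := by
        have hprod := Subgroup.card_eq_card_quotient_mul_card_subgroup (Subgroup.center G)
        have h2 : 2 ≤ Nat.card (Subgroup.center G) :=
          (Subgroup.one_lt_card_iff_ne_bot _).mpr hZ
        have hqpos : 0 < Nat.card (G ⧸ Subgroup.center G) := Nat.card_pos
        nlinarith [hcard, hprod, h2, hqpos]
      haveI := ih (G ⧸ Subgroup.center G) hcardq hq
      exact of_quotient_center_nilpotent ‹_›

end Stmt17Aux

theorem stmt17 {G : Type u} [Group G] [Finite G] :
    Group.IsNilpotent G ↔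
      ∀ (N H : Type u) [Group N] [Group H] (f : N →* H),
        Subgroup.normalClosure (f.range : Set H) = ⊤ →
          Lifts f ((MonoidHom.id G).prod (MonoidHom.id G)) := by
  constructor
  · intro hnil N H _ _ f hf i j hcomm
    set j₁ : H →* G := (MonoidHom.fst G G).comp j with hj₁
    set j₂ : H →* G := (MonoidHom.snd G G).comp j with hj₂
    have hjf : ∀ n, j (f n) = (i n, i n) := fun n => (DFunLike.congr_fun hcomm n).symm
    have hrange : (f.range : Set H) ⊆ {h | j₁ h = j₂ h} := by
      rintro _ ⟨n, rfl⟩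
      show (j (f n)).1 = (j (f n)).2
      rw [hjf]
    have hncl : Subgroup.normalClosure {h | j₁ h = j₂ h} = ⊤ :=
      le_antisymm le_top (hf ▸ Subgroup.normalClosure_mono hrange)
    have heq : j₁ = j₂ := Stmt17Aux.sep_of_nilpotent G H j₁ j₂ hncl
    refine ⟨j₁, MonoidHom.ext fun n => ?_, MonoidHom.ext fun h => ?_⟩
    · show (j (f n)).1 = i n
      rw [hjf]
    · show ((j₁ h, j₁ h) : G × G) = (j₁ h, j₂ h)
      exact congrArg (Prod.mk (j₁ h)) (DFunLike.congr_fun heq h)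
  · intro hlift
    apply Stmt17Aux.nilpotent_of_sep (Nat.card G) G le_rfl
    intro H _ j₁ j₂ hE
    set E : Subgroup H := MonoidHom.eqLocus j₁ j₂ with hEdef
    have hEset : {h | j₁ h = j₂ h} = (E : Set H) := rfl
    have hncl : Subgroup.normalClosure (E.subtype.range : Set H) = ⊤ := by
      rw [Subgroup.range_subtype, ← hEset]
      exact hE
    have hcomm : ((MonoidHom.id G).prod (MonoidHom.id G)).comp (j₁.comp E.subtype)
        = (j₁.prod j₂).comp E.subtype := by
      ext e
      · rfl
      · exact (e.2 : j₁ e = j₂ e)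
    obtain ⟨h, _, hh⟩ := hlift E H E.subtype hncl (j₁.comp E.subtype) (j₁.prod j₂) hcomm
    ext x
    have h1 : h x = j₁ x := congrArg Prod.fst (DFunLike.congr_fun hh x)
    have h2 : h x = j₂ x := congrArg Prod.snd (DFunLike.congr_fun hh x)
    rw [← h1, ← h2]
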